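/- Let μ ∈ ℝⁿ and σ > 0, and let g be a random vector in ℝⁿ whose coordinates g_i are independent with g_i ~ N(μ_i, σ²). Let e be a random vector in ℝⁿ, independent of g, with i.i.d. coordinates uniform on [-Δ/2, Δ/2], and define g̃ = g + ‖g‖_∞ · e. Then the excess variance of the dithered quantization satisfies E[‖g̃ − μ‖₂²] − E[‖g − μ‖₂²] ≤ (Δ²/3)·ln(√2·n)·E[‖g − μ‖₂²] + (nΔ²/6)·‖μ‖_∞². -/

import Mathlib

open MeasureTheory ProbabilityTheory

/-- The uniform probability distribution on the interval `[a, b]`. -/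
noncomputable def uniformIcc (a b : ℝ) : Measure ℝ := volume[|Set.Icc a b]

section Aux

open Real Set
open scoped NNReal ENNReal

namespace DQSGAux

/-! ### Auxiliary real integrals -/

lemma integral_sq_mul_exp_neg_mul_sq {b : ℝ} (hb : 0 < b) :
    ∫ x : ℝ, x ^ 2 * Real.exp (-b * x ^ 2) = Real.sqrt π / (2 * b * Real.sqrt b) := by
  have h1 : ∫ x : ℝ, x ^ 2 * Real.exp (-b * x ^ 2)
      = 2 * ∫ x in Ioi (0:ℝ), x ^ 2 * Real.exp (-b * x ^ 2) := by
    rw [← integral_comp_abs (f := fun x => x ^ 2 * Real.exp (-b * x ^ 2))]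
    congr 1; ext x; rw [sq_abs]
  have h2 : ∫ x in Ioi (0:ℝ), x ^ 2 * Real.exp (-b * x ^ 2)
      = ∫ x in Ioi (0:ℝ), x ^ (2:ℝ) * Real.exp (-b * x ^ (2:ℝ)) := by
    refine setIntegral_congr_fun measurableSet_Ioi (fun x hx => ?_)
    rw [← Real.rpow_natCast x 2]; norm_num
  rw [h1, h2, integral_rpow_mul_exp_neg_mul_rpow (by norm_num) (by norm_num) hb]
  have h3 : ((2:ℝ) + 1) / 2 = 1/2 + 1 := by norm_num
  rw [h3, Real.Gamma_add_one (by norm_num), Real.Gamma_one_half_eq]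
  have h4 : (-((2:ℝ) + 1) / 2) = (-1) + (-(1/2)) := by norm_num
  rw [h4, Real.rpow_add hb, Real.rpow_neg_one, Real.rpow_neg hb.le, ← Real.sqrt_eq_rpow]
  have hsb : Real.sqrt b ≠ 0 := (Real.sqrt_pos.mpr hb).ne'
  field_simp

/-! ### Integrals against `gaussianReal` -/

lemma gaussianReal_withDensity (m : ℝ) {v : ℝ≥0} (hv : v ≠ 0) :
    gaussianReal m v
      = volume.withDensity (fun x => ((gaussianPDFReal m v x).toNNReal : ℝ≥0∞)) := by
  rw [gaussianReal_of_var_ne_zero m hv]; rfl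

lemma integral_gaussianReal_eq (m : ℝ) {v : ℝ≥0} (hv : v ≠ 0) (f : ℝ → ℝ) :
    ∫ x, f x ∂(gaussianReal m v) = ∫ x, gaussianPDFReal m v x * f x := by
  rw [gaussianReal_withDensity m hv,
    integral_withDensity_eq_integral_smul (measurable_gaussianPDFReal m v).real_toNNReal f]
  congr 1; ext x
  simp [NNReal.smul_def, Real.coe_toNNReal _ (gaussianPDFReal_nonneg m v x)]

lemma integrable_gaussianReal_iff (m : ℝ) {v : ℝ≥0} (hv : v ≠ 0) (f : ℝ → ℝ) :
    Integrable f (gaussianReal m v) ↔ Integrable (fun x => gaussianPDFReal m v x * f x) volume := by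
  rw [gaussianReal_withDensity m hv,
    integrable_withDensity_iff_integrable_smul (measurable_gaussianPDFReal m v).real_toNNReal]
  constructor <;> intro h <;> refine h.congr (Filter.Eventually.of_forall fun x => ?_) <;>
    simp [NNReal.smul_def, Real.coe_toNNReal _ (gaussianPDFReal_nonneg m v x)]

variable {σ : ℝ}

lemma toNNReal_sq_ne_zero (hσ : 0 < σ) : (σ^2).toNNReal ≠ 0 := by
  simp [Real.toNNReal_eq_zero, not_le]; positivity

lemma coe_toNNReal_sq (σ : ℝ) : (((σ^2).toNNReal : ℝ≥0) : ℝ) = σ^2 :=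
  Real.coe_toNNReal _ (sq_nonneg σ)

lemma sqrt_two_pi_sq (hσ : 0 < σ) : Real.sqrt (2*π*σ^2) = σ * Real.sqrt 2 * Real.sqrt π := by
  rw [show 2*π*σ^2 = (σ * Real.sqrt 2)^2 * π by
      rw [mul_pow, Real.sq_sqrt (by norm_num : (0:ℝ) ≤ 2)]; ring,
    Real.sqrt_mul (sq_nonneg _), Real.sqrt_sq (by positivity)]

lemma pdf_eq (hσ : 0 < σ) (m : ℝ) :
    gaussianPDFReal m (σ^2).toNNReal
      = fun x => (σ * Real.sqrt 2 * Real.sqrt π)⁻¹ * Real.exp (-(x-m)^2/(2*σ^2)) := by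
  funext x
  rw [gaussianPDFReal, coe_toNNReal_sq, sqrt_two_pi_sq hσ]

lemma pdf_mul_exp (hσ : 0 < σ) (m x : ℝ) :
    gaussianPDFReal m (σ^2).toNNReal x * Real.exp (x^2/(4*σ^2))
      = ((σ * Real.sqrt 2 * Real.sqrt π)⁻¹ * Real.exp (m^2/(2*σ^2)))
          * Real.exp (-(4*σ^2)⁻¹ * (x - 2*m)^2) := by
  have hs : σ^2 ≠ 0 := by positivity
  have h : -(x-m)^2/(2*σ^2) + x^2/(4*σ^2)
      = m^2/(2*σ^2) + (-(4*σ^2)⁻¹ * (x-2*m)^2) := by field_simp; ring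
  rw [pdf_eq hσ m]
  calc ((σ * Real.sqrt 2 * Real.sqrt π)⁻¹ * Real.exp (-(x-m)^2/(2*σ^2)))
        * Real.exp (x^2/(4*σ^2))
      = (σ * Real.sqrt 2 * Real.sqrt π)⁻¹
          * Real.exp (-(x-m)^2/(2*σ^2) + x^2/(4*σ^2)) := by rw [Real.exp_add]; ring
    _ = (σ * Real.sqrt 2 * Real.sqrt π)⁻¹
          * Real.exp (m^2/(2*σ^2) + (-(4*σ^2)⁻¹ * (x-2*m)^2)) := by rw [h]
    _ = _ := by rw [Real.exp_add]; ring

lemma pdf_mul_sq (hσ : 0 < σ) (m x : ℝ) :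
    gaussianPDFReal m (σ^2).toNNReal x * (x - m)^2
      = (σ * Real.sqrt 2 * Real.sqrt π)⁻¹
          * ((x - m)^2 * Real.exp (-(2*σ^2)⁻¹ * (x - m)^2)) := by
  have hs : σ^2 ≠ 0 := by positivity
  rw [pdf_eq hσ m]
  dsimp only
  rw [show -(x - m)^2 / (2 * σ^2) = -(2*σ^2)⁻¹ * (x - m)^2 by field_simp]
  ring

lemma integrable_exp_quarter_gaussian (hσ : 0 < σ) (m : ℝ) :
    Integrable (fun x => Real.exp (x^2/(4*σ^2))) (gaussianReal m (σ^2).toNNReal) := by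
  rw [integrable_gaussianReal_iff m (toNNReal_sq_ne_zero hσ)]
  have hb : (0:ℝ) < (4*σ^2)⁻¹ := by positivity
  have h := ((integrable_exp_neg_mul_sq hb).comp_sub_right (2*m)).const_mul
    ((σ * Real.sqrt 2 * Real.sqrt π)⁻¹ * Real.exp (m^2/(2*σ^2)))
  exact h.congr (Filter.Eventually.of_forall fun x => (pdf_mul_exp hσ m x).symm)

lemma integral_exp_quarter_gaussian (hσ : 0 < σ) (m : ℝ) :
    ∫ x, Real.exp (x^2/(4*σ^2)) ∂(gaussianReal m (σ^2).toNNReal)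
      = Real.sqrt 2 * Real.exp (m^2/(2*σ^2)) := by
  rw [integral_gaussianReal_eq m (toNNReal_sq_ne_zero hσ)]
  have hb : (0:ℝ) < (4*σ^2)⁻¹ := by positivity
  have hπ : Real.sqrt π ≠ 0 := by positivity
  have h2' : Real.sqrt 2 ≠ 0 := by positivity
  calc ∫ x, gaussianPDFReal m (σ^2).toNNReal x * Real.exp (x^2/(4*σ^2))
      = ∫ x, ((σ * Real.sqrt 2 * Real.sqrt π)⁻¹ * Real.exp (m^2/(2*σ^2)))
          * Real.exp (-(4*σ^2)⁻¹ * (x - 2*m)^2) := by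
        congr 1; ext x; exact pdf_mul_exp hσ m x
    _ = ((σ * Real.sqrt 2 * Real.sqrt π)⁻¹ * Real.exp (m^2/(2*σ^2)))
          * ∫ x, Real.exp (-(4*σ^2)⁻¹ * (x - 2*m)^2) := integral_const_mul _ _
    _ = ((σ * Real.sqrt 2 * Real.sqrt π)⁻¹ * Real.exp (m^2/(2*σ^2)))
          * ∫ x, Real.exp (-(4*σ^2)⁻¹ * x^2) := by
        rw [integral_sub_right_eq_self (fun x => Real.exp (-(4*σ^2)⁻¹ * x^2)) (2*m)]
    _ = Real.sqrt 2 * Real.exp (m^2/(2*σ^2)) := by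
        rw [integral_gaussian]
        rw [show π / (4*σ^2)⁻¹ = (2*σ)^2 * π by field_simp; ring,
          Real.sqrt_mul (sq_nonneg _), Real.sqrt_sq (by positivity)]
        field_simp
        linear_combination (-1)
          * Real.sq_sqrt (show (0:ℝ) ≤ 2 by norm_num)

lemma integrable_sq_gaussian (hσ : 0 < σ) (m : ℝ) :
    Integrable (fun x => (x - m)^2) (gaussianReal m (σ^2).toNNReal) := by
  rw [integrable_gaussianReal_iff m (toNNReal_sq_ne_zero hσ)]
  have hb : (0:ℝ) < (2*σ^2)⁻¹ := by positivity
  have base : Integrable (fun x : ℝ => x^2 * Real.exp (-(2*σ^2)⁻¹ * x^2)) volume := by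
    have h := integrable_rpow_mul_exp_neg_mul_sq hb (show (-1:ℝ) < 2 by norm_num)
    refine h.congr (Filter.Eventually.of_forall fun x => ?_)
    have h2 : (2:ℝ) = ((2:ℕ):ℝ) := by norm_num
    simp only [h2, Real.rpow_natCast]
  have h := (base.comp_sub_right m).const_mul (σ * Real.sqrt 2 * Real.sqrt π)⁻¹
  exact h.congr (Filter.Eventually.of_forall fun x => (pdf_mul_sq hσ m x).symm)

lemma integral_sq_gaussian (hσ : 0 < σ) (m : ℝ) :
    ∫ x, (x - m)^2 ∂(gaussianReal m (σ^2).toNNReal) = σ^2 := by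
  rw [integral_gaussianReal_eq m (toNNReal_sq_ne_zero hσ)]
  have hb : (0:ℝ) < (2*σ^2)⁻¹ := by positivity
  have hπ : Real.sqrt π ≠ 0 := by positivity
  have h2' : Real.sqrt 2 ≠ 0 := by positivity
  calc ∫ x, gaussianPDFReal m (σ^2).toNNReal x * (x - m)^2
      = ∫ x, (σ * Real.sqrt 2 * Real.sqrt π)⁻¹
          * ((x - m)^2 * Real.exp (-(2*σ^2)⁻¹ * (x - m)^2)) := by
        congr 1; ext x; exact pdf_mul_sq hσ m x
    _ = (σ * Real.sqrt 2 * Real.sqrt π)⁻¹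
          * ∫ x, (x - m)^2 * Real.exp (-(2*σ^2)⁻¹ * (x - m)^2) := integral_const_mul _ _
    _ = (σ * Real.sqrt 2 * Real.sqrt π)⁻¹
          * ∫ x, x^2 * Real.exp (-(2*σ^2)⁻¹ * x^2) := by
        rw [integral_sub_right_eq_self (fun x => x^2 * Real.exp (-(2*σ^2)⁻¹ * x^2)) m]
    _ = σ^2 := by
        rw [integral_sq_mul_exp_neg_mul_sq hb, Real.sqrt_inv,
          show 2*σ^2 = (σ * Real.sqrt 2)^2 by
            rw [mul_pow, Real.sq_sqrt (by norm_num : (0:ℝ) ≤ 2)]; ring,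
          Real.sqrt_sq (by positivity)]
        field_simp
        linear_combination (1)
          * Real.sq_sqrt (show (0:ℝ) ≤ 2 by norm_num)

/-! ### Uniform distribution moments -/

variable {Δ : ℝ}

lemma uniformIcc_eq (hΔ : 0 < Δ) :
    uniformIcc (-(Δ/2)) (Δ/2)
      = (ENNReal.ofReal Δ)⁻¹ • volume.restrict (Icc (-(Δ/2)) (Δ/2)) := by
  rw [uniformIcc, ProbabilityTheory.cond, Real.volume_Icc]
  norm_num

lemma integral_uniformIcc (hΔ : 0 < Δ) (f : ℝ → ℝ) :
    ∫ x, f x ∂(uniformIcc (-(Δ/2)) (Δ/2))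
      = Δ⁻¹ * ∫ x in (-(Δ/2))..(Δ/2), f x := by
  rw [uniformIcc_eq hΔ, integral_smul_measure, ENNReal.toReal_inv,
    ENNReal.toReal_ofReal hΔ.le, smul_eq_mul,
    intervalIntegral.integral_of_le (by linarith), ← integral_Icc_eq_integral_Ioc]

lemma integrable_uniformIcc (hΔ : 0 < Δ) {f : ℝ → ℝ} (hf : Continuous f) :
    Integrable f (uniformIcc (-(Δ/2)) (Δ/2)) := by
  rw [uniformIcc_eq hΔ]
  refine Integrable.smul_measure ?_ (by simpa using hΔ)
  exact hf.integrableOn_Icc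

lemma integral_id_uniformIcc (hΔ : 0 < Δ) :
    ∫ x, x ∂(uniformIcc (-(Δ/2)) (Δ/2)) = 0 := by
  rw [integral_uniformIcc hΔ, integral_id]
  norm_num

lemma integral_sq_uniformIcc (hΔ : 0 < Δ) :
    ∫ x, x^2 ∂(uniformIcc (-(Δ/2)) (Δ/2)) = Δ^2/12 := by
  rw [integral_uniformIcc hΔ, integral_pow]
  have : Δ ≠ 0 := hΔ.ne'
  field_simp
  ring

/-! ### Sup norm facts -/

lemma exists_norm_eq_abs {n : ℕ} (hn : n ≠ 0) (f : Fin n → ℝ) : ∃ i, ‖f‖ = |f i| := by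
  have : Nonempty (Fin n) := ⟨⟨0, Nat.pos_of_ne_zero hn⟩⟩
  obtain ⟨i, -, hi⟩ := Finset.exists_mem_eq_sup (Finset.univ : Finset (Fin n))
    Finset.univ_nonempty (fun i => ‖f i‖₊)
  exact ⟨i, by rw [← coe_nnnorm, Pi.nnnorm_def, hi, coe_nnnorm, Real.norm_eq_abs]⟩

lemma norm_sq_le_sum_sq {n : ℕ} (f : Fin n → ℝ) : ‖f‖^2 ≤ ∑ i, (f i)^2 := by
  rcases Nat.eq_zero_or_pos n with h | h
  · subst h
    have : f = 0 := Subsingleton.elim f 0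
    rw [this, norm_zero]
    simp
  · obtain ⟨i, hi⟩ := exists_norm_eq_abs h.ne' f
    rw [hi, sq_abs]
    exact Finset.single_le_sum (fun j _ => sq_nonneg (f j)) (Finset.mem_univ i)

end DQSGAux

end Aux

open DQSGAux

set_option maxHeartbeats 1600000 in
/-- **Excess variance of dithered quantization under a Gaussian gradient model (Lemma 2, eq. (3)).**
If the coordinates of `g` are independent with `g_i ~ N(μ_i, σ²)`, and `e` is independent of `g`
with i.i.d. coordinates uniform on `[-Δ/2, Δ/2]`, then the DQSG `g̃ = g + ‖g‖_∞ • e` satisfies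
`E[‖g̃ − μ‖₂²] − E[‖g − μ‖₂²] ≤ (Δ²/3)·ln(√2·n)·E[‖g − μ‖₂²] + (nΔ²/6)·‖μ‖_∞²`.
(The norms `‖g ω‖`, `‖μ‖` on `Fin n → ℝ` are sup norms; squared Euclidean norms are sums of
squares.) -/
theorem dqsg_excess_variance_gaussian
    {Ω : Type*} [MeasurableSpace Ω] (P : Measure Ω) [IsProbabilityMeasure P]
    (n : ℕ) (Δ : ℝ) (hΔ : 0 < Δ) (σ : ℝ) (hσ : 0 < σ)
    (g e : Ω → (Fin n → ℝ)) (hg : Measurable g) (he : Measurable e)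
    (μ : Fin n → ℝ)
    (hgIndep : iIndepFun (fun i ω => g ω i) P)
    (hgLaw : ∀ i, Measure.map (fun ω => g ω i) P = gaussianReal (μ i) (Real.toNNReal (σ ^ 2)))
    (hindep : IndepFun g e P)
    (heIndep : iIndepFun (fun i ω => e ω i) P)
    (heLaw : ∀ i, Measure.map (fun ω => e ω i) P = uniformIcc (-(Δ / 2)) (Δ / 2)) :
    (∫ ω, ∑ i, (g ω i + ‖g ω‖ * e ω i - μ i) ^ 2 ∂P)
        - (∫ ω, ∑ i, (g ω i - μ i) ^ 2 ∂P)
      ≤ Δ ^ 2 / 3 * Real.log (Real.sqrt 2 * n) * (∫ ω, ∑ i, (g ω i - μ i) ^ 2 ∂P)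
        + n * Δ ^ 2 / 6 * ‖μ‖ ^ 2 := by
  rcases Nat.eq_zero_or_pos n with hn | hn
  · subst hn
    simp only [Finset.univ_eq_empty, Finset.sum_empty, integral_zero, sub_zero, mul_zero,
      Nat.cast_zero, zero_mul, zero_div, zero_add, add_zero, le_refl, sub_self]
  have hn' : n ≠ 0 := hn.ne'
  have hσ2 : (0:ℝ) < σ^2 := by positivity
  have hgi : ∀ i, Measurable fun ω => g ω i := fun i => (measurable_pi_apply i).comp hg
  have hei : ∀ i, Measurable fun ω => e ω i := fun i => (measurable_pi_apply i).comp he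
  have hN : Measurable fun ω => ‖g ω‖ := hg.norm
  -- transferred coordinate facts
  have int_sq : ∀ i, Integrable (fun ω => (g ω i - μ i)^2) P := by
    intro i
    have h := integrable_sq_gaussian hσ (μ i)
    rw [← hgLaw i] at h
    exact (integrable_map_measure
      (by exact (measurable_id.sub_const (μ i)).pow_const 2 |>.aestronglyMeasurable)
      (hgi i).aemeasurable).mp h
  have val_sq : ∀ i, ∫ ω, (g ω i - μ i)^2 ∂P = σ^2 := by
    intro i
    have h := integral_map (μ := P) (φ := fun ω => g ω i) (hgi i).aemeasurable
      (f := fun x => (x - μ i)^2)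
      (by exact (measurable_id.sub_const (μ i)).pow_const 2 |>.aestronglyMeasurable)
    rw [hgLaw i, integral_sq_gaussian hσ (μ i)] at h
    exact h.symm
  have int_exp : ∀ i, Integrable (fun ω => Real.exp ((g ω i)^2/(4*σ^2))) P := by
    intro i
    have h := integrable_exp_quarter_gaussian hσ (μ i)
    rw [← hgLaw i] at h
    exact (integrable_map_measure
      (by exact (Real.measurable_exp.comp ((measurable_id.pow_const 2).div_const _)).aestronglyMeasurable)
      (hgi i).aemeasurable).mp h
  have val_exp : ∀ i, ∫ ω, Real.exp ((g ω i)^2/(4*σ^2)) ∂P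
      = Real.sqrt 2 * Real.exp ((μ i)^2/(2*σ^2)) := by
    intro i
    have h := integral_map (μ := P) (φ := fun ω => g ω i) (hgi i).aemeasurable
      (f := fun x => Real.exp (x^2/(4*σ^2)))
      (by exact (Real.measurable_exp.comp ((measurable_id.pow_const 2).div_const _)).aestronglyMeasurable)
    rw [hgLaw i, integral_exp_quarter_gaussian hσ (μ i)] at h
    exact h.symm
  have int_e : ∀ i, Integrable (fun ω => e ω i) P := by
    intro i
    have h := integrable_uniformIcc hΔ continuous_id
    rw [← heLaw i] at h
    exact (integrable_map_measure measurable_id.aestronglyMeasurable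
      (hei i).aemeasurable).mp h
  have val_e : ∀ i, ∫ ω, e ω i ∂P = 0 := by
    intro i
    have h := integral_map (μ := P) (φ := fun ω => e ω i) (hei i).aemeasurable
      (f := fun x => x) measurable_id.aestronglyMeasurable
    rw [heLaw i, integral_id_uniformIcc hΔ] at h
    exact h.symm
  have int_e2 : ∀ i, Integrable (fun ω => (e ω i)^2) P := by
    intro i
    have h := integrable_uniformIcc hΔ (f := fun x : ℝ => x^2) (by continuity)
    rw [← heLaw i] at h
    exact (integrable_map_measure
      (by exact (measurable_id.pow_const 2).aestronglyMeasurable)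
      (hei i).aemeasurable).mp h
  have val_e2 : ∀ i, ∫ ω, (e ω i)^2 ∂P = Δ^2/12 := by
    intro i
    have h := integral_map (μ := P) (φ := fun ω => e ω i) (hei i).aemeasurable
      (f := fun x => x^2)
      (by exact (measurable_id.pow_const 2).aestronglyMeasurable)
    rw [heLaw i, integral_sq_uniformIcc hΔ] at h
    exact h.symm
  -- norm-squared integrability
  have hpt_sq_exp : ∀ (x : ℝ), x^2 ≤ 4*σ^2 * Real.exp (x^2/(4*σ^2)) := by
    intro x
    have h1 : x^2/(4*σ^2) ≤ Real.exp (x^2/(4*σ^2)) := by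
      have := Real.add_one_le_exp (x^2/(4*σ^2))
      linarith [Real.exp_pos (x^2/(4*σ^2))]
    calc x^2 = 4*σ^2 * (x^2/(4*σ^2)) := by field_simp
      _ ≤ 4*σ^2 * Real.exp (x^2/(4*σ^2)) :=
          mul_le_mul_of_nonneg_left h1 (by positivity)
  have int_N2 : Integrable (fun ω => ‖g ω‖^2) P := by
    refine Integrable.mono' (g := fun ω => ∑ i, 4*σ^2 * Real.exp ((g ω i)^2/(4*σ^2)))
      (integrable_finset_sum _ (fun i _ => (int_exp i).const_mul _))
      ((hN.pow_const 2).aestronglyMeasurable)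
      (Filter.Eventually.of_forall fun ω => ?_)
    rw [Real.norm_eq_abs, abs_of_nonneg (sq_nonneg _)]
    calc ‖g ω‖^2 ≤ ∑ i, (g ω i)^2 := norm_sq_le_sum_sq (g ω)
      _ ≤ ∑ i, 4*σ^2 * Real.exp ((g ω i)^2/(4*σ^2)) :=
          Finset.sum_le_sum fun i _ => hpt_sq_exp (g ω i)
  -- cross and quadratic terms via independence
  have crossIndep : ∀ i, IndepFun (fun ω => (g ω i - μ i) * ‖g ω‖) (fun ω => e ω i) P := by
    intro i
    exact hindep.comp (φ := fun v : Fin n → ℝ => (v i - μ i) * ‖v‖)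
      (ψ := fun v : Fin n → ℝ => v i)
      (by fun_prop)
      (measurable_pi_apply i)
  have crossVal : ∀ i, ∫ ω, ((g ω i - μ i) * ‖g ω‖) * e ω i ∂P = 0 := by
    intro i
    have h := (crossIndep i).integral_fun_mul_eq_mul_integral
      ((((hgi i).sub_const (μ i)).mul hN).aestronglyMeasurable)
      ((hei i).aestronglyMeasurable)
    calc ∫ ω, ((g ω i - μ i) * ‖g ω‖) * e ω i ∂P
        = (∫ ω, (g ω i - μ i) * ‖g ω‖ ∂P) * ∫ ω, e ω i ∂P := h
      _ = 0 := by rw [val_e i, mul_zero]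
  have crossInt : ∀ i, Integrable (fun ω => ((g ω i - μ i) * ‖g ω‖) * e ω i) P := by
    intro i
    refine (crossIndep i).integrable_mul ?_ (int_e i)
    refine Integrable.mono' (g := fun ω => ((g ω i - μ i)^2 + ‖g ω‖^2)/2)
      (((int_sq i).add int_N2).div_const 2)
      ((((hgi i).sub_const (μ i)).mul hN).aestronglyMeasurable)
      (Filter.Eventually.of_forall fun ω => ?_)
    rw [Real.norm_eq_abs, abs_mul]
    nlinarith [sq_nonneg (|g ω i - μ i| - |‖g ω‖|), sq_abs (g ω i - μ i), sq_abs ‖g ω‖,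
      abs_nonneg (g ω i - μ i), abs_nonneg ‖g ω‖]
  have quadIndep : ∀ i, IndepFun (fun ω => ‖g ω‖^2) (fun ω => (e ω i)^2) P := by
    intro i
    exact hindep.comp (φ := fun v : Fin n → ℝ => ‖v‖^2)
      (ψ := fun v : Fin n → ℝ => (v i)^2)
      (measurable_norm.pow_const 2) ((measurable_pi_apply i).pow_const 2)
  have quadVal : ∀ i, ∫ ω, ‖g ω‖^2 * (e ω i)^2 ∂P
      = (∫ ω, ‖g ω‖^2 ∂P) * (Δ^2/12) := by
    intro i
    have h := (quadIndep i).integral_fun_mul_eq_mul_integral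
      ((hN.pow_const 2).aestronglyMeasurable) (((hei i).pow_const 2).aestronglyMeasurable)
    calc ∫ ω, ‖g ω‖^2 * (e ω i)^2 ∂P
        = (∫ ω, ‖g ω‖^2 ∂P) * ∫ ω, (e ω i)^2 ∂P := h
      _ = (∫ ω, ‖g ω‖^2 ∂P) * (Δ^2/12) := by rw [val_e2 i]
  have quadInt : ∀ i, Integrable (fun ω => ‖g ω‖^2 * (e ω i)^2) P := fun i =>
    (quadIndep i).integrable_mul int_N2 (int_e2 i)
  -- expansion of the quantized residual
  have expand : (fun ω => ∑ i, (g ω i + ‖g ω‖ * e ω i - μ i)^2)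
      = fun ω => (∑ i, (g ω i - μ i)^2)
          + ∑ i, (2 * (((g ω i - μ i) * ‖g ω‖) * e ω i) + ‖g ω‖^2 * (e ω i)^2) := by
    funext ω
    rw [← Finset.sum_add_distrib]
    exact Finset.sum_congr rfl fun i _ => by ring
  have int_pert : ∀ i, Integrable
      (fun ω => 2 * (((g ω i - μ i) * ‖g ω‖) * e ω i) + ‖g ω‖^2 * (e ω i)^2) P :=
    fun i => ((crossInt i).const_mul 2).add (quadInt i)
  have diff_eq : (∫ ω, ∑ i, (g ω i + ‖g ω‖ * e ω i - μ i) ^ 2 ∂P)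
      - (∫ ω, ∑ i, (g ω i - μ i) ^ 2 ∂P)
      = n * ((∫ ω, ‖g ω‖^2 ∂P) * (Δ^2/12)) := by
    rw [expand, integral_add (integrable_finset_sum _ (fun i _ => int_sq i))
      (integrable_finset_sum _ (fun i _ => int_pert i))]
    rw [add_sub_cancel_left, integral_finset_sum _ (fun i _ => int_pert i)]
    have : ∀ i : Fin n, ∫ ω, (2 * (((g ω i - μ i) * ‖g ω‖) * e ω i) + ‖g ω‖^2 * (e ω i)^2) ∂P
        = (∫ ω, ‖g ω‖^2 ∂P) * (Δ^2/12) := by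
      intro i
      rw [integral_add ((crossInt i).const_mul 2) (quadInt i), integral_const_mul,
        crossVal i, quadVal i, mul_zero, zero_add]
    rw [Finset.sum_congr rfl fun i _ => this i]
    simp [Finset.card_univ]
  -- value of the reference second moment
  have sumval : ∫ ω, ∑ i, (g ω i - μ i)^2 ∂P = n * σ^2 := by
    rw [integral_finset_sum _ (fun i _ => int_sq i)]
    rw [Finset.sum_congr rfl fun i _ => val_sq i]
    simp [Finset.card_univ]
  -- key bound on E‖g‖²
  set IN := ∫ ω, ‖g ω‖^2 ∂P with hIN
  set L := Real.log (Real.sqrt 2 * n) with hLdef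
  have hnR : (1:ℝ) ≤ (n:ℝ) := by exact_mod_cast hn
  have hsqrt2 : (1:ℝ) ≤ Real.sqrt 2 := by
    rw [show (1:ℝ) = Real.sqrt 1 by simp]
    exact Real.sqrt_le_sqrt (by norm_num)
  have hL : 0 ≤ L := Real.log_nonneg (by nlinarith)
  have hIN0 : 0 ≤ IN := integral_nonneg fun ω => sq_nonneg _
  have key : IN ≤ 4*σ^2*L + 2*‖μ‖^2 := by
    set S : Ω → ℝ := fun ω => ∑ i, Real.exp ((g ω i)^2/(4*σ^2)) with hSdef
    set c : ℝ := Real.sqrt 2 * n * Real.exp (‖μ‖^2/(2*σ^2)) with hcdef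
    have hnpos : (0:ℝ) < n := by linarith
    have hcpos : 0 < c := by
      rw [hcdef]
      exact mul_pos (mul_pos (by linarith) hnpos) (Real.exp_pos _)
    have hSpos : ∀ ω, 0 < S ω :=
      fun ω => Finset.sum_pos (fun i _ => Real.exp_pos _) ⟨⟨0, hn⟩, Finset.mem_univ _⟩
    have hpoint : ∀ ω, ‖g ω‖^2 ≤ 4*σ^2 * ((Real.log c - 1) + S ω / c) := by
      intro ω
      obtain ⟨i, hi⟩ := exists_norm_eq_abs hn' (g ω)
      have h1 : (g ω i)^2/(4*σ^2) ≤ Real.log (S ω) := by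
        rw [Real.le_log_iff_exp_le (hSpos ω)]
        simp only [hSdef]
        exact Finset.single_le_sum (f := fun j => Real.exp ((g ω j)^2/(4*σ^2)))
          (fun j _ => (Real.exp_pos _).le) (Finset.mem_univ i)
      have h2 : Real.log (S ω) ≤ Real.log c + (S ω / c - 1) := by
        have h3 := Real.log_le_sub_one_of_pos (div_pos (hSpos ω) hcpos)
        rw [Real.log_div (hSpos ω).ne' hcpos.ne'] at h3
        linarith
      rw [hi, sq_abs]
      have h4 : (g ω i)^2 ≤ 4*σ^2 * Real.log (S ω) := by
        calc (g ω i)^2 = 4*σ^2 * ((g ω i)^2/(4*σ^2)) := by field_simp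
          _ ≤ 4*σ^2 * Real.log (S ω) := mul_le_mul_of_nonneg_left h1 (by positivity)
      calc (g ω i)^2 ≤ 4*σ^2 * Real.log (S ω) := h4
        _ ≤ 4*σ^2 * ((Real.log c - 1) + S ω / c) :=
            mul_le_mul_of_nonneg_left (by linarith) (by positivity)
    have hintS : Integrable S P := integrable_finset_sum _ (fun i _ => int_exp i)
    have hintbound : Integrable (fun ω => 4*σ^2 * ((Real.log c - 1) + S ω / c)) P :=
      (((integrable_const _).add (hintS.div_const c)).const_mul (4*σ^2))
    have hmono : IN ≤ ∫ ω, 4*σ^2 * ((Real.log c - 1) + S ω / c) ∂P :=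
      integral_mono int_N2 hintbound hpoint
    have hboundval : ∫ ω, 4*σ^2 * ((Real.log c - 1) + S ω / c) ∂P
        = 4*σ^2 * ((Real.log c - 1) + (∫ ω, S ω ∂P) / c) := by
      rw [integral_const_mul, integral_add (integrable_const _) (hintS.div_const c),
        integral_const, integral_div]
      simp
    have hSval : ∫ ω, S ω ∂P = ∑ i, Real.sqrt 2 * Real.exp ((μ i)^2/(2*σ^2)) := by
      rw [hSdef, integral_finset_sum _ (fun i _ => int_exp i)]
      exact Finset.sum_congr rfl fun i _ => val_exp i
    have hSle : ∫ ω, S ω ∂P ≤ c := by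
      rw [hSval, hcdef]
      calc ∑ i, Real.sqrt 2 * Real.exp ((μ i)^2/(2*σ^2))
          ≤ ∑ _i : Fin n, Real.sqrt 2 * Real.exp (‖μ‖^2/(2*σ^2)) := by
            refine Finset.sum_le_sum fun i _ => ?_
            refine mul_le_mul_of_nonneg_left ?_ (Real.sqrt_nonneg 2)
            refine Real.exp_le_exp.mpr (div_le_div_of_nonneg_right ?_ (by positivity))
            calc (μ i)^2 = |μ i|^2 := (sq_abs _).symm
              _ ≤ ‖μ‖^2 := by
                  have := norm_le_pi_norm μ i
                  rw [Real.norm_eq_abs] at this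
                  exact pow_le_pow_left₀ (abs_nonneg _) this 2
        _ = Real.sqrt 2 * n * Real.exp (‖μ‖^2/(2*σ^2)) := by
            rw [Finset.sum_const, Finset.card_univ, Fintype.card_fin, nsmul_eq_mul]
            ring
    have hlogc : Real.log c = L + ‖μ‖^2/(2*σ^2) := by
      rw [hcdef, Real.log_mul (by positivity) (Real.exp_ne_zero _), Real.log_exp, hLdef]
    have hdivle : (∫ ω, S ω ∂P) / c ≤ 1 := by
      rw [div_le_one hcpos]; exact hSle
    calc IN ≤ 4*σ^2 * ((Real.log c - 1) + (∫ ω, S ω ∂P) / c) := by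
          rw [← hboundval]; exact hmono
      _ ≤ 4*σ^2 * Real.log c := by
          refine mul_le_mul_of_nonneg_left ?_ (by positivity)
          linarith
      _ = 4*σ^2*L + 2*‖μ‖^2 := by
          rw [hlogc]
          field_simp
          ring
  -- conclude
  rw [diff_eq, sumval]
  calc (n:ℝ) * (IN * (Δ^2/12)) = ((n:ℝ)*(Δ^2/12)) * IN := by ring
    _ ≤ ((n:ℝ)*(Δ^2/12)) * (4*σ^2*L + 2*‖μ‖^2) :=
        mul_le_mul_of_nonneg_left key (by positivity)
    _ = Δ^2/3 * L * ((n:ℝ)*σ^2) + (n:ℝ)*Δ^2/6 * ‖μ‖^2 := by ring
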